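/- Let A : dom(A) ⊆ H₁ → H₂ be densely defined closed, V ∈ B(H₁), Q = ((0, A*),(A, 0)), W = ((V, 0),(0, 0)). Suppose ζ ∈ ℂ with ζ² ∈ ρ(A*A) ∩ ρ(AA*) and [I + ζV(A*A - ζ²I)⁻¹]⁻¹ ∈ B(H₁). Then ζ ∈ ρ(Q + W) and the resolvent (Q + W - ζI)⁻¹ is given explicitly by the 2×2 block matrix with entries: (1,1): ζ(A*A - ζ²)⁻¹[I + ζV(A*A - ζ²)⁻¹]⁻¹; (2,1): A(A*A - ζ²)⁻¹[I + ζV(A*A - ζ²)⁻¹]⁻¹; (1,2): -ζ(A*A - ζ²)⁻¹[I + ζV(A*A - ζ²)⁻¹]⁻¹VA*(AA* - ζ²)⁻¹ + A*(AA* - ζ²)⁻¹; (2,2): -A(A*A - ζ²)⁻¹[I + ζV(A*A - ζ²)⁻¹]⁻¹VA*(AA* - ζ²)⁻¹ + ζ(AA* - ζ²)⁻¹. -/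

import Mathlib

/-- The explicit 2×2 block operator of Theorem 4.2: candidate resolvent
`(Q + W - ζ)⁻¹` built from `R1 = (A*A - ζ²)⁻¹`, `R2 = (AA* - ζ²)⁻¹`,
`J = [I + ζV(A*A - ζ²)⁻¹]⁻¹` and the (unbounded) operators `A`, `A*` (encoded by
total linear maps `A`, `As`). -/
noncomputable def resQW {H₁ H₂ : Type*}
    [NormedAddCommGroup H₁] [InnerProductSpace ℂ H₁]
    [NormedAddCommGroup H₂] [InnerProductSpace ℂ H₂]
    (A : H₁ →ₗ[ℂ] H₂) (As : H₂ →ₗ[ℂ] H₁)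
    (V J R1 : H₁ →L[ℂ] H₁) (R2 : H₂ →L[ℂ] H₂) (ζ : ℂ)
    (x : H₁) (y : H₂) : H₁ × H₂ :=
  (ζ • R1 (J x) - ζ • R1 (J (V (As (R2 y)))) + As (R2 y),
   A (R1 (J x)) - A (R1 (J (V (As (R2 y))))) + ζ • R2 y)

/-- Let `A : dom(A) ⊆ H₁ → H₂` be densely defined closed,
`V ∈ B(H₁)`, `Q = ((0, A*), (A, 0))`, `W = ((V, 0), (0, 0))`.  Suppose `ζ ∈ ℂ` with
`ζ² ∈ ρ(A*A) ∩ ρ(AA*)` (witnessed by the two-sided resolvents `R1`, `R2`) and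
`[I + ζV(A*A - ζ²I)⁻¹]⁻¹ ∈ B(H₁)` (witnessed by `J`).  Then `ζ ∈ ρ(Q + W)` and
`(Q + W - ζI)⁻¹` is given explicitly by the block matrix `resQW`:  it maps into
`dom(A) ⊕ dom(A*)` and is a two-sided inverse of `Q + W - ζI`. -/
theorem stmt_12 {H₁ H₂ : Type*}
    [NormedAddCommGroup H₁] [InnerProductSpace ℂ H₁] [CompleteSpace H₁]
    [NormedAddCommGroup H₂] [InnerProductSpace ℂ H₂] [CompleteSpace H₂]
    (domA : Submodule ℂ H₁) (domAs : Submodule ℂ H₂)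
    (A : H₁ →ₗ[ℂ] H₂) (As : H₂ →ₗ[ℂ] H₁)
    (hdense : Dense (domA : Set H₁)) (hdense' : Dense (domAs : Set H₂))
    (hclosed : IsClosed {p : H₁ × H₂ | p.1 ∈ domA ∧ p.2 = A p.1})
    (hadj : ∀ u ∈ domA, ∀ v ∈ domAs, (inner ℂ (As v) u : ℂ) = inner ℂ v (A u))
    (hadj_max : ∀ (v : H₂) (w : H₁),
      (∀ u ∈ domA, (inner ℂ w u : ℂ) = inner ℂ v (A u)) → v ∈ domAs ∧ As v = w)
    (V : H₁ →L[ℂ] H₁) (ζ : ℂ)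
    -- R1 = (A*A - ζ²)⁻¹ :
    (R1 : H₁ →L[ℂ] H₁)
    (hR1dom : ∀ x, R1 x ∈ domA ∧ A (R1 x) ∈ domAs)
    (hR1r : ∀ x, As (A (R1 x)) - ζ ^ 2 • R1 x = x)
    (hR1l : ∀ u ∈ domA, A u ∈ domAs → R1 (As (A u) - ζ ^ 2 • u) = u)
    -- R2 = (AA* - ζ²)⁻¹ :
    (R2 : H₂ →L[ℂ] H₂)
    (hR2dom : ∀ y, R2 y ∈ domAs ∧ As (R2 y) ∈ domA)
    (hR2r : ∀ y, A (As (R2 y)) - ζ ^ 2 • R2 y = y)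
    (hR2l : ∀ v ∈ domAs, As v ∈ domA → R2 (A (As v) - ζ ^ 2 • v) = v)
    -- J = [I + ζ V (A*A - ζ²)⁻¹]⁻¹ (two-sided inverse) :
    (J : H₁ →L[ℂ] H₁)
    (hJ1 : ∀ x, J (x + ζ • V (R1 x)) = x)
    (hJ2 : ∀ x, J x + ζ • V (R1 (J x)) = x) :
    -- resQW is a right inverse of Q + W - ζ, with values in dom(A) ⊕ dom(A*) :
    (∀ (x : H₁) (y : H₂),
      (resQW A As V J R1 R2 ζ x y).1 ∈ domA ∧
      (resQW A As V J R1 R2 ζ x y).2 ∈ domAs ∧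
      V (resQW A As V J R1 R2 ζ x y).1 + As (resQW A As V J R1 R2 ζ x y).2
        - ζ • (resQW A As V J R1 R2 ζ x y).1 = x ∧
      A (resQW A As V J R1 R2 ζ x y).1 - ζ • (resQW A As V J R1 R2 ζ x y).2 = y)
    ∧ -- and a left inverse on dom(A) ⊕ dom(A*) :
    (∀ x ∈ domA, ∀ y ∈ domAs,
      resQW A As V J R1 R2 ζ (V x + As y - ζ • x) (A x - ζ • y) = (x, y)) := by
  have hright : ∀ (x : H₁) (y : H₂),
      (resQW A As V J R1 R2 ζ x y).1 ∈ domA ∧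
      (resQW A As V J R1 R2 ζ x y).2 ∈ domAs ∧
      V (resQW A As V J R1 R2 ζ x y).1 + As (resQW A As V J R1 R2 ζ x y).2
        - ζ • (resQW A As V J R1 R2 ζ x y).1 = x ∧
      A (resQW A As V J R1 R2 ζ x y).1 - ζ • (resQW A As V J R1 R2 ζ x y).2 = y := by
    intro x y
    simp only [resQW]
    refine ⟨?_, ?_, ?_, ?_⟩
    · exact domA.add_mem (domA.sub_mem (domA.smul_mem _ (hR1dom _).1)
        (domA.smul_mem _ (hR1dom _).1)) (hR2dom y).2
    · exact domAs.add_mem (domAs.sub_mem (hR1dom _).2 (hR1dom _).2)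
        (domAs.smul_mem _ (hR2dom y).1)
    · have e1 := hR1r (J x)
      have e2 := hR1r (J (V (As (R2 y))))
      have e3 := hJ2 x
      have e4 := hJ2 (V (As (R2 y)))
      simp only [map_add, map_sub, map_smul]
      linear_combination (norm := module) e1 - e2 + e3 - e4
    · have e := hR2r y
      simp only [map_add, map_sub, map_smul]
      linear_combination (norm := module) e
  refine ⟨hright, fun x hx y hy => ?_⟩
  obtain ⟨hmem1, hmem2, heq1, heq2⟩ := hright (V x + As y - ζ • x) (A x - ζ • y)
  set x' := (resQW A As V J R1 R2 ζ (V x + As y - ζ • x) (A x - ζ • y)).1 with hx'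
  set y' := (resQW A As V J R1 R2 ζ (V x + As y - ζ • x) (A x - ζ • y)).2 with hy'
  set a := x' - x with hadef
  set b := y' - y with hbdef
  have ha : a ∈ domA := domA.sub_mem hmem1 hx
  have hb : b ∈ domAs := domAs.sub_mem hmem2 hy
  have h1 : V a + As b - ζ • a = 0 := by
    simp only [hadef, hbdef, map_sub, smul_sub]
    linear_combination (norm := module) heq1
  have h2 : A a = ζ • b := by
    simp only [hadef, hbdef, map_sub, smul_sub]
    linear_combination (norm := module) heq2
  have hAa : A a ∈ domAs := h2 ▸ domAs.smul_mem ζ hb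
  have h3 : As (A a) - ζ ^ 2 • a = (-ζ) • V a := by
    rw [h2, map_smul]
    linear_combination (norm := module) ζ • h1
  have ha0 : a = (-ζ) • R1 (V a) := by
    have h4 := hR1l a ha hAa
    rw [h3, map_smul] at h4
    exact h4.symm
  have hVa : V a = 0 := by
    have h5 := hJ1 (V a)
    have h6 : V a + ζ • V (R1 (V a)) = 0 := by
      have h0 : a + ζ • R1 (V a) = 0 := by
        linear_combination (norm := module) ha0
      have : V (a + ζ • R1 (V a)) = 0 := by rw [h0, map_zero]
      simpa [map_add, map_smul] using this
    rw [h6, map_zero] at h5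
    exact h5.symm
  have haz : a = 0 := by rw [ha0, hVa, map_zero, smul_zero]
  have hAsb : As b = 0 := by
    have := h1
    rw [haz] at this
    simpa using this
  have hbz : b = 0 := by
    have h7 := hR2l b hb (hAsb ▸ domA.zero_mem)
    rw [hAsb, map_zero] at h7
    have hzb : ζ • b = 0 := by rw [← h2, haz, map_zero]
    rw [show (ζ ^ 2 : ℂ) • b = ζ • ζ • b by rw [pow_two, mul_smul], hzb, smul_zero,
      zero_sub, neg_zero, map_zero] at h7
    exact h7.symm
  have hx'' : x' = x := by rw [← sub_eq_zero]; exact haz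
  have hy'' : y' = y := by rw [← sub_eq_zero]; exact hbz
  exact Prod.ext hx'' hy''
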